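/- Let G be a labeled block graph, let B' be a support block of G, let c_i ∈ C\{c_h} be a cut vertex of B', and let B_{ij} be an end block of G whose unique cut vertex is c_i. If l_2(B_{ij}) ≥ 2, then γ(G) = γ(G'), where G' is the labeled block graph obtained from G by relabelling max{3 − |r(V(B_{ij}))|, 0} vertices of B_{ij} that have t-label B as R, with priority given to c_i, and keeping every other label the same. -/

import Mathlib

open SimpleGraph
open scoped Classical

/-- The two possible t-labels of a vertex of a labeled block graph. -/
inductive TLabel
  | B
  | R
deriving DecidableEq

/-- A labeled graph: a graph together with labels `M_V(v) = (t v, s v)` on vertices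
and `k e` on (potential) edges. -/
structure LBG (V : Type*) where
  graph : SimpleGraph V
  t : V → TLabel
  s : V → ℕ
  k : Sym2 V → ℕ

variable {V : Type*}

/-- closed neighbourhood `N_G[v]` -/
def cN (G : SimpleGraph V) (v : V) : Set V := insert v {u | G.Adj v u}

/-- open neighbourhood `N_G(v)` -/
def oN (G : SimpleGraph V) (v : V) : Set V := {u | G.Adj v u}

/-- closed neighbourhood `N_G[e]` of an edge -/
def eN (G : SimpleGraph V) (e : Sym2 V) : Set V := {w | ∃ x ∈ e, w ∈ cN G x}

/-- `r(S)`: the vertices of `S` with t-label `R`. -/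
def rSet (H : LBG V) (S : Set V) : Set V := {v | v ∈ S ∧ H.t v = TLabel.R}

/-- An `M_{LVE}`-dominating set of a labeled graph. -/
def IsMLVE (H : LBG V) (L : Set V) : Prop :=
  (∀ v, H.t v = TLabel.R → v ∈ L) ∧
  (∀ v, H.s v ≤ (cN H.graph v ∩ L).ncard) ∧
  (∀ e ∈ H.graph.edgeSet, H.k e ≤ (eN H.graph e ∩ L).ncard) ∧
  (∀ e ∈ H.graph.edgeSet, ∀ f ∈ H.graph.edgeSet, e ≠ f →
    H.k e + H.k f - 1 ≤ ((eN H.graph e ∪ eN H.graph f) ∩ L).ncard)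

/-- `γ(G)`: the minimum cardinality of an `M_{LVE}`-dominating set. -/
noncomputable def gam (H : LBG V) : ℕ :=
  sInf {n | ∃ L : Set V, IsMLVE H L ∧ L.ncard = n}

/-- A liar's vertex-edge dominating set. -/
def IsLiarVE (G : SimpleGraph V) (L : Set V) : Prop :=
  (∀ e ∈ G.edgeSet, 2 ≤ (eN G e ∩ L).ncard) ∧
  (∀ e ∈ G.edgeSet, ∀ f ∈ G.edgeSet, e ≠ f → 3 ≤ ((eN G e ∪ eN G f) ∩ L).ncard)

/-- `v` is a cut vertex of `G`: removing it disconnects two vertices that were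
connected in `G`. -/
def IsCutVertex (G : SimpleGraph V) (v : V) : Prop :=
  ∃ x y : {u : V // u ≠ v}, G.Reachable x.1 y.1 ∧
    ¬ (G.induce {u : V | u ≠ v}).Reachable ⟨x.1, x.2⟩ ⟨y.1, y.2⟩

/-- A vertex set inducing a connected subgraph without a cut vertex. -/
def GoodSet (G : SimpleGraph V) (Bs : Set V) : Prop :=
  (G.induce Bs).Connected ∧ ∀ v, ¬ IsCutVertex (G.induce Bs) v

/-- A block of `G`: a maximal connected subgraph without a cut vertex. -/
def IsBlock (G : SimpleGraph V) (Bs : Set V) : Prop :=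
  GoodSet G Bs ∧ ∀ Bs' : Set V, Bs ⊆ Bs' → GoodSet G Bs' → Bs' = Bs

/-- A block graph: every block is a clique. -/
def IsBlockGraph (G : SimpleGraph V) : Prop :=
  ∀ Bs : Set V, IsBlock G Bs → G.IsClique Bs

/-- `Bs` is an end block of `G` whose unique cut vertex is `c`. -/
def EndBlockWith (G : SimpleGraph V) (Bs : Set V) (c : V) : Prop :=
  IsBlock G Bs ∧ c ∈ Bs ∧ IsCutVertex G c ∧ ∀ c' ∈ Bs, IsCutVertex G c' → c' = c

/-- The cut-tree of `G`: vertices are the blocks and the cut vertices of `G`,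
with an edge joining a block to each cut vertex it contains. -/
def cutTree (G : SimpleGraph V) :
    SimpleGraph ({Bs : Set V // IsBlock G Bs} ⊕ {v : V // IsCutVertex G v}) :=
  SimpleGraph.fromRel (fun a b =>
    match a, b with
    | Sum.inl Bs, Sum.inr c => (c : V) ∈ (Bs : Set V)
    | _, _ => False)

/-- Distance to the root `ρ` (a cut vertex) in the cut-tree. -/
noncomputable def rootDist (G : SimpleGraph V) (ρ : {v : V // IsCutVertex G v})
    (x : {Bs : Set V // IsBlock G Bs} ⊕ {v : V // IsCutVertex G v}) : ℕ :=
  (cutTree G).dist x (Sum.inr ρ)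

/-- `Bi` is a descendant block of `Bj` in the cut-tree rooted at `ρ`:
`Bj` is the parent of the parent of `Bi`. -/
def IsDescBlock (G : SimpleGraph V) (ρ : {v : V // IsCutVertex G v})
    (Bj Bi : {Bs : Set V // IsBlock G Bs}) : Prop :=
  ∃ c : {v : V // IsCutVertex G v}, (c : V) ∈ (Bi : Set V) ∧ (c : V) ∈ (Bj : Set V) ∧
    rootDist G ρ (Sum.inr c) + 1 = rootDist G ρ (Sum.inl Bi) ∧
    rootDist G ρ (Sum.inl Bj) + 1 = rootDist G ρ (Sum.inr c)

/-- A support block: all of its descendant blocks are end blocks of `G`. -/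
def IsSupportBlock (G : SimpleGraph V) (ρ : {v : V // IsCutVertex G v})
    (B' : {Bs : Set V // IsBlock G Bs}) : Prop :=
  ∀ Bi, IsDescBlock G ρ B' Bi → ∃ c : V, EndBlockWith G (Bi : Set V) c

/-- The edges of (the subgraph induced by) a block `Bs`. -/
def blockEdges (G : SimpleGraph V) (Bs : Set V) : Set (Sym2 V) :=
  {e | e ∈ G.edgeSet ∧ ∀ x ∈ e, x ∈ Bs}

/-- Relabel all vertices of `A` with t-label `R`, keeping every other label the same. -/
noncomputable def relabelR (H : LBG V) (A : Set V) : LBG V :=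
  { H with t := fun v => if v ∈ A then TLabel.R else H.t v }

/-- `l_2(c)`: the number of edges of the end blocks whose unique cut vertex is `c`
that are incident to `c` and have k-label `2`. -/
noncomputable def l2cut (H : LBG V) (c : V) : ℕ :=
  ({e : Sym2 V | (∃ Bs : Set V, EndBlockWith H.graph Bs c ∧ e ∈ blockEdges H.graph Bs) ∧
     c ∈ e ∧ H.k e = 2}).ncard


section AuxLemmasZ
variable {V : Type*} {G : SimpleGraph V}

private lemma reach_of_rtgZ {S : Set V} {x y : V}
    (h : Relation.ReflTransGen (fun a b => b ∈ S ∧ G.Adj a b) x y) (hx : x ∈ S) :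
    ∃ hy : y ∈ S, (G.induce S).Reachable ⟨x, hx⟩ ⟨y, hy⟩ := by
  induction h with
  | refl => exact ⟨hx, Reachable.refl _⟩
  | tail _ step ih =>
    obtain ⟨hb, hr⟩ := ih
    exact ⟨step.1, hr.trans (SimpleGraph.Adj.reachable
      (show (G.induce S).Adj ⟨_, hb⟩ ⟨_, step.1⟩ from step.2))⟩

private lemma connected_of_linksZ {S K : Set V} (hKS : K ⊆ S) (hK : K.Nonempty)
    (hcl : G.IsClique K)
    (hlink : ∀ x ∈ S, ∃ k ∈ K, Relation.ReflTransGen (fun a b => b ∈ S ∧ G.Adj a b) x k) :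
    (G.induce S).Connected := by
  rw [SimpleGraph.connected_iff]
  refine ⟨fun x y => ?_, ⟨⟨hK.some, hKS hK.some_mem⟩⟩⟩
  obtain ⟨k1, hk1, h1⟩ := hlink x.1 x.2
  obtain ⟨k2, hk2, h2⟩ := hlink y.1 y.2
  obtain ⟨hk1S, r1⟩ := reach_of_rtgZ h1 x.2
  obtain ⟨hk2S, r2⟩ := reach_of_rtgZ h2 y.2
  have rk : (G.induce S).Reachable ⟨k1, hk1S⟩ ⟨k2, hk2S⟩ := by
    rcases eq_or_ne k1 k2 with rfl | hne
    · exact Reachable.refl _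
    · exact SimpleGraph.Adj.reachable
        (show (G.induce S).Adj ⟨k1, hk1S⟩ ⟨k2, hk2S⟩ from hcl hk1 hk2 hne)
  exact (r1.trans rk).trans r2.symm

private lemma rtg_of_walkZ {T S : Set V} {a b : ↥T} (Q : (G.induce T).Walk a b) :
    (∀ c ∈ Q.support, (c : V) ∈ S) →
    Relation.ReflTransGen (fun p q => q ∈ S ∧ G.Adj p q) a.1 b.1 := by
  induction Q with
  | nil => exact fun _ => Relation.ReflTransGen.refl
  | cons h q ih =>
    intro hsub
    refine Relation.ReflTransGen.head ⟨hsub _ ?_, h⟩ (ih fun c hc => hsub c ?_)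
    · rw [SimpleGraph.Walk.support_cons]; exact List.mem_cons_of_mem _ q.start_mem_support
    · rw [SimpleGraph.Walk.support_cons]; exact List.mem_cons_of_mem _ hc

private lemma not_cutVertex_of_del_connectedZ {S : Set V} (u : ↥S)
    (hconn : (G.induce (S \ {(u : V)})).Connected) : ¬ IsCutVertex (G.induce S) u := by
  rintro ⟨x, y, -, hnr⟩
  apply hnr
  have hx' : x.1.1 ∈ S \ {(u : V)} := ⟨x.1.2, fun h => x.2 (Subtype.ext h)⟩
  have hy' : y.1.1 ∈ S \ {(u : V)} := ⟨y.1.2, fun h => y.2 (Subtype.ext h)⟩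
  have h2 := (hconn.preconnected ⟨x.1.1, hx'⟩ ⟨y.1.1, hy'⟩).map
    (⟨fun z => ⟨⟨z.1, z.2.1⟩, fun h => z.2.2 (congrArg Subtype.val h)⟩, fun hadj => hadj⟩ :
      G.induce (S \ {(u : V)}) →g (G.induce S).induce {a : ↥S | a ≠ u})
  convert h2 using 2 <;> exact Subtype.ext rfl

private lemma end_block_closedZ {Bij : Set V} {ci : V}
    (hBG : IsBlockGraph G) (hEnd : EndBlockWith G Bij ci) :
    ∀ v ∈ Bij, v ≠ ci → ∀ w, G.Adj v w → w ∈ Bij := by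
  intro v hvB hvci w hadj
  by_contra hw
  have hcl : G.IsClique Bij := hBG Bij hEnd.1
  have hciB : ci ∈ Bij := hEnd.2.1
  have hvciAdj : G.Adj v ci := hcl hvB hciB hvci
  have hncv : ¬ IsCutVertex G v := fun hcv => hvci (hEnd.2.2.2 v hvB hcv)
  rw [IsCutVertex] at hncv
  push_neg at hncv
  have hwv : w ≠ v := hadj.ne'
  have hciv : ci ≠ v := fun h => hvci h.symm
  have hreach : (G.induce {u : V | u ≠ v}).Reachable ⟨w, hwv⟩ ⟨ci, hciv⟩ :=
    hncv ⟨w, hwv⟩ ⟨ci, hciv⟩ (hadj.symm.reachable.trans hvciAdj.reachable)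
  obtain ⟨W0⟩ := hreach
  obtain ⟨Wp, hWpPath⟩ := W0.toPath
  set Su : Set V := {u : V | u ≠ v} with hSu
  set Pset : Set V := {x | ∃ hx : x ∈ Su, (⟨x, hx⟩ : ↥Su) ∈ Wp.support} with hPset
  set Bs' : Set V := Bij ∪ Pset with hBs'
  have memPset : ∀ c : ↥Su, c ∈ Wp.support → (c : V) ∈ Pset := fun c hc => ⟨c.2, hc⟩
  have linkFull : ∀ x ∈ Bs', ∃ k ∈ Bij,
      Relation.ReflTransGen (fun a b => b ∈ Bs' ∧ G.Adj a b) x k := by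
    intro x hx
    rcases hx with hx | hx
    · exact ⟨x, hx, Relation.ReflTransGen.refl⟩
    · obtain ⟨hxS, hxmem⟩ := hx
      exact ⟨ci, hciB, rtg_of_walkZ (Wp.dropUntil _ hxmem)
        (fun c hc => Or.inr (memPset c (Wp.support_dropUntil_subset hxmem hc)))⟩
  have linkDel : ∀ u : V, ∀ x ∈ Bs' \ {u}, ∃ k ∈ Bij \ {u},
      Relation.ReflTransGen (fun a b => b ∈ Bs' \ {u} ∧ G.Adj a b) x k := by
    intro u x hx
    obtain ⟨hxB, hxu⟩ := hx
    rcases hxB with hxB | hxP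
    · exact ⟨x, ⟨hxB, hxu⟩, Relation.ReflTransGen.refl⟩
    obtain ⟨hxS, hxmem⟩ := hxP
    rcases eq_or_ne u v with rfl | huv
    · refine ⟨ci, ⟨hciB, hciv⟩, rtg_of_walkZ (Wp.dropUntil _ hxmem) ?_⟩
      intro c hc
      exact ⟨Or.inr (memPset c (Wp.support_dropUntil_subset hxmem hc)), c.2⟩
    · by_cases hudrop : ∃ hc : u ∈ Su, (⟨u, hc⟩ : ↥Su) ∈ (Wp.dropUntil _ hxmem).support
      · obtain ⟨huS, humem⟩ := hudrop
        have hnd : Wp.support.Nodup := hWpPath.support_nodup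
        have hnd2 : ((Wp.takeUntil _ hxmem).support
            ++ (Wp.dropUntil _ hxmem).support.tail).Nodup := by
          rw [← SimpleGraph.Walk.support_append, Wp.take_spec hxmem]; exact hnd
        rw [List.nodup_append] at hnd2
        have hutail : (⟨u, huS⟩ : ↥Su) ∈ (Wp.dropUntil _ hxmem).support.tail := by
          have hcons := (Wp.dropUntil _ hxmem).support_eq_cons
          rw [hcons, List.mem_cons] at humem
          rcases humem with h | h
          · exact absurd (congrArg Subtype.val h).symm hxu
          · exact h
        have hunotake : (⟨u, huS⟩ : ↥Su) ∉ (Wp.takeUntil _ hxmem).support :=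
          fun hmem => hnd2.2.2 _ hmem _ hutail rfl
        have hch : Relation.ReflTransGen (fun a b => b ∈ Bs' \ {u} ∧ G.Adj a b) x w := by
          refine rtg_of_walkZ ((Wp.takeUntil _ hxmem).reverse) ?_
          intro c hc
          rw [SimpleGraph.Walk.support_reverse, List.mem_reverse] at hc
          refine ⟨Or.inr (memPset c (Wp.support_takeUntil_subset hxmem hc)), ?_⟩
          intro hcu
          exact hunotake (by
            rwa [show (⟨u, huS⟩ : ↥Su) = c from Subtype.ext (Set.mem_singleton_iff.mp hcu).symm])
        refine ⟨v, ⟨hvB, fun h => huv (Set.mem_singleton_iff.mp h).symm⟩,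
          hch.tail ⟨⟨Or.inl hvB, fun h => huv (Set.mem_singleton_iff.mp h).symm⟩, hadj.symm⟩⟩
      · refine ⟨ci, ⟨hciB, ?_⟩, rtg_of_walkZ (Wp.dropUntil _ hxmem) ?_⟩
        · intro h
          have h' : ci = u := Set.mem_singleton_iff.mp h
          subst h'
          exact hudrop ⟨hciv, SimpleGraph.Walk.end_mem_support _⟩
        · intro c hc
          refine ⟨Or.inr (memPset c (Wp.support_dropUntil_subset hxmem hc)), ?_⟩
          intro hcu
          have hcu' : (c : V) = u := Set.mem_singleton_iff.mp hcu
          exact hudrop ⟨hcu' ▸ c.2, by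
            rwa [show (⟨u, hcu' ▸ c.2⟩ : ↥Su) = c from Subtype.ext hcu'.symm]⟩
  have hKsub : Bij ⊆ Bs' := Set.subset_union_left
  have hconnS : (G.induce Bs').Connected :=
    connected_of_linksZ hKsub ⟨ci, hciB⟩ hcl linkFull
  have hdel : ∀ u : V, (G.induce (Bs' \ {u})).Connected := by
    intro u
    refine connected_of_linksZ (Set.diff_subset_diff_left hKsub) ?_
      (hcl.subset Set.diff_subset) (linkDel u)
    rcases eq_or_ne u v with rfl | huv
    · exact ⟨ci, hciB, fun h => hciv (Set.mem_singleton_iff.mp h)⟩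
    · exact ⟨v, hvB, fun h => huv (Set.mem_singleton_iff.mp h).symm⟩
  have hgood : GoodSet G Bs' := ⟨hconnS, fun u => not_cutVertex_of_del_connectedZ u (hdel u.1)⟩
  have heq : Bs' = Bij := hEnd.1.2 Bs' hKsub hgood
  have hwP : w ∈ Pset := ⟨hwv, Wp.start_mem_support⟩
  rw [← heq] at hw
  exact hw (Or.inr hwP)

end AuxLemmasZ

theorem stmt_0
    {V : Type*} [Fintype V] [DecidableEq V]
    (H : LBG V)
    (hBG : IsBlockGraph H.graph)
    (hk : ∀ e : Sym2 V, H.k e ≤ 2)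
    (ρ : {v : V // IsCutVertex H.graph v})
    (B' : {Bs : Set V // IsBlock H.graph Bs})
    (hsupp : IsSupportBlock H.graph ρ B')
    (ch : V) (hchCut : IsCutVertex H.graph ch) (hchB : ch ∈ (B' : Set V))
    (hchMin : ∀ (c : V) (hc : IsCutVertex H.graph c), c ∈ (B' : Set V) →
      rootDist H.graph ρ (Sum.inr ⟨ch, hchCut⟩) ≤ rootDist H.graph ρ (Sum.inr ⟨c, hc⟩))
    (ci : V) (hciCut : IsCutVertex H.graph ci) (hciB : ci ∈ (B' : Set V)) (hcich : ci ≠ ch)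
    (Bij : Set V) (hEnd : EndBlockWith H.graph Bij ci)
    (hl2 : 2 ≤ ({e : Sym2 V | e ∈ blockEdges H.graph Bij ∧ ci ∉ e ∧ H.k e = 2}).ncard)
    (A : Set V)
    (hAsub : A ⊆ {v | v ∈ Bij ∧ H.t v = TLabel.B})
    (hAcard : A.ncard = 3 - (rSet H Bij).ncard)
    (hApri : H.t ci = TLabel.B → A.Nonempty → ci ∈ A) :
    gam H = gam (relabelR H A) := by
  classical
  rcases Set.eq_empty_or_nonempty A with rfl | hAne
  · have hrel : relabelR H ∅ = H := by
      unfold relabelR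
      congr
      funext v
      simp
    rw [hrel]
  set G := H.graph with hG
  have hclique : G.IsClique Bij := hBG Bij hEnd.1
  have hciBij : ci ∈ Bij := hEnd.2.1
  have hint : ∀ v ∈ Bij, v ≠ ci → ∀ w, G.Adj v w → w ∈ Bij := end_block_closedZ hBG hEnd
  have nice_cN : ∀ v : V, cN G v ∩ Bij = ∅ ∨ cN G v ∩ Bij = {ci} ∨ Bij ⊆ cN G v := by
    intro v
    by_cases hv : v ∈ Bij
    · right; right
      intro u hu
      rw [cN]
      rcases eq_or_ne u v with rfl | hne
      · exact Set.mem_insert _ _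
      · exact Set.mem_insert_iff.mpr (Or.inr (hclique hv hu hne.symm))
    · have hsub : cN G v ∩ Bij ⊆ {ci} := by
        rintro u ⟨hu, huB⟩
        rw [cN, Set.mem_insert_iff] at hu
        rcases hu with rfl | hu
        · exact absurd huB hv
        · rw [Set.mem_singleton_iff]
          by_contra hne
          have hu' : G.Adj v u := hu
          exact hv (hint u huB hne v hu'.symm)
      rcases Set.subset_singleton_iff_eq.mp hsub with h | h
      · exact Or.inl h
      · exact Or.inr (Or.inl h)
  have nice_union : ∀ X Y : Set V,
      (X ∩ Bij = ∅ ∨ X ∩ Bij = {ci} ∨ Bij ⊆ X) →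
      (Y ∩ Bij = ∅ ∨ Y ∩ Bij = {ci} ∨ Bij ⊆ Y) →
      ((X ∪ Y) ∩ Bij = ∅ ∨ (X ∪ Y) ∩ Bij = {ci} ∨ Bij ⊆ X ∪ Y) := by
    intro X Y hX hY
    rcases hX with h1 | h1 | h1
    · rcases hY with h2 | h2 | h2
      · left; rw [Set.union_inter_distrib_right, h1, h2, Set.union_empty]
      · right; left; rw [Set.union_inter_distrib_right, h1, h2, Set.empty_union]
      · right; right; exact h2.trans Set.subset_union_right
    · rcases hY with h2 | h2 | h2
      · right; left; rw [Set.union_inter_distrib_right, h1, h2, Set.union_empty]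
      · right; left; rw [Set.union_inter_distrib_right, h1, h2, Set.union_self]
      · right; right; exact h2.trans Set.subset_union_right
    · right; right; exact h1.trans Set.subset_union_left
  have eN_pair : ∀ a b : V, eN G s(a, b) = cN G a ∪ cN G b := by
    intro a b
    ext z
    simp only [eN, Set.mem_setOf_eq, Sym2.mem_iff, Set.mem_union]
    constructor
    · rintro ⟨x, (rfl | rfl), hz⟩
      · exact Or.inl hz
      · exact Or.inr hz
    · rintro (hz | hz)
      · exact ⟨a, Or.inl rfl, hz⟩
      · exact ⟨b, Or.inr rfl, hz⟩
  have nice_eN : ∀ e : Sym2 V, eN G e ∩ Bij = ∅ ∨ eN G e ∩ Bij = {ci} ∨ Bij ⊆ eN G e := by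
    intro e
    induction e using Sym2.ind with
    | _ a b => rw [eN_pair]; exact nice_union _ _ (nice_cN a) (nice_cN b)
  have hsubM : ∀ L : Set V, IsMLVE (relabelR H A) L → IsMLVE H L := by
    intro L h
    refine ⟨fun v hv => h.1 v ?_, h.2.1, h.2.2.1, h.2.2.2⟩
    show (if v ∈ A then TLabel.R else H.t v) = TLabel.R
    split
    · rfl
    · exact hv
  have swap : ∀ L : Set V, IsMLVE H L →
      ∃ L' : Set V, IsMLVE (relabelR H A) L' ∧ L'.ncard = L.ncard := by
    intro L hL
    set r0 : Set V := rSet H Bij with hr0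
    have hr0Bij : r0 ⊆ Bij := fun z hz => hz.1
    have hrL : r0 ⊆ L ∩ Bij := fun z hz => ⟨hL.1 z hz.2, hz.1⟩
    obtain ⟨e, he, f, hf, hef⟩ := (Set.one_lt_ncard (Set.toFinite _)).mp
      (lt_of_lt_of_le one_lt_two hl2)
    have hsubBij : ∀ g : Sym2 V,
        g ∈ {e : Sym2 V | e ∈ blockEdges G Bij ∧ ci ∉ e ∧ H.k e = 2} → eN G g ⊆ Bij := by
      intro g hg z hz
      obtain ⟨x, hxe, hz⟩ := hz
      have hxB : x ∈ Bij := hg.1.2 x hxe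
      have hxci : x ≠ ci := fun h => hg.2.1 (h ▸ hxe)
      rw [cN, Set.mem_insert_iff] at hz
      rcases hz with rfl | hz
      · exact hxB
      · have hz' : G.Adj x z := hz
        exact hint x hxB hxci z hz'
    have h3 : 3 ≤ (L ∩ Bij).ncard := by
      have h4 := hL.2.2.2 e he.1.1 f hf.1.1 hef
      rw [he.2.2, hf.2.2] at h4
      refine le_trans h4 (Set.ncard_le_ncard ?_ (Set.toFinite _))
      rintro z ⟨hz1, hz2⟩
      rcases hz1 with hz1 | hz1
      · exact ⟨hz2, hsubBij e he hz1⟩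
      · exact ⟨hz2, hsubBij f hf hz1⟩
    have hABij : A ⊆ Bij := fun z hz => (hAsub hz).1
    have hdisjrA : Disjoint r0 A := by
      rw [Set.disjoint_left]
      intro a ha haA
      exact absurd (ha.2.symm.trans (hAsub haA).2) (by decide)
    set m := (L ∩ Bij).ncard with hm
    have hrm : r0.ncard ≤ m := Set.ncard_le_ncard hrL (Set.toFinite _)
    have hB0card : (r0 ∪ A).ncard = r0.ncard + A.ncard :=
      Set.ncard_union_eq hdisjrA (Set.toFinite _) (Set.toFinite _)
    have hB0le : (r0 ∪ A).ncard ≤ m := by rw [hB0card, hAcard]; omega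
    have hsplitm : ((L ∩ Bij) ∩ (r0 ∪ A)).ncard + ((L ∩ Bij) \ (r0 ∪ A)).ncard = m :=
      Set.ncard_inter_add_ncard_diff_eq_ncard _ _ (Set.toFinite _)
    have hinterle : ((L ∩ Bij) ∩ (r0 ∪ A)).ncard ≤ (r0 ∪ A).ncard :=
      Set.ncard_le_ncard Set.inter_subset_right (Set.toFinite _)
    obtain ⟨S0, hS0sub, hS0card⟩ := Set.exists_subset_card_eq
      (show m - (r0 ∪ A).ncard ≤ ((L ∩ Bij) \ (r0 ∪ A)).ncard by omega)
    set B1 : Set V := (r0 ∪ A) ∪ S0 with hB1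
    have hB1Bij : B1 ⊆ Bij := by
      rintro z (h | h)
      · rcases h with h | h
        · exact hr0Bij h
        · exact hABij h
      · exact (hS0sub h).1.2
    have hdisjB1 : Disjoint (r0 ∪ A) S0 := Set.disjoint_right.mpr fun a haS => (hS0sub haS).2
    have hB1card : B1.ncard = m := by
      rw [hB1, Set.ncard_union_eq hdisjB1 (Set.toFinite _) (Set.toFinite _), hS0card]
      omega
    set L' : Set V := (L \ Bij) ∪ B1 with hL'
    have hdisjL' : Disjoint (L \ Bij) B1 :=
      Set.disjoint_left.mpr fun a ha hB => ha.2 (hB1Bij hB)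
    have hsplitL : (L ∩ Bij).ncard + (L \ Bij).ncard = L.ncard :=
      Set.ncard_inter_add_ncard_diff_eq_ncard _ _ (Set.toFinite _)
    have hL'card : L'.ncard = L.ncard := by
      rw [hL', Set.ncard_union_eq hdisjL' (Set.toFinite _) (Set.toFinite _), hB1card]
      omega
    have hciL' : ci ∈ L' := by
      rw [hL', hB1]
      rcases h : H.t ci with _ | _
      · exact Or.inr (Or.inl (Or.inr (hApri h hAne)))
      · exact Or.inr (Or.inl (Or.inl ⟨hciBij, h⟩))
    have houtside : ∀ z, z ∉ Bij → (z ∈ L' ↔ z ∈ L) := by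
      intro z hz
      rw [hL']
      constructor
      · rintro (h | h)
        · exact h.1
        · exact absurd (hB1Bij h) hz
      · intro h
        exact Or.inl ⟨h, hz⟩
    have hBijL' : Bij ∩ L' = B1 := by
      rw [hL']
      ext z
      constructor
      · rintro ⟨hzB, h | h⟩
        · exact absurd hzB h.2
        · exact h
      · intro h
        exact ⟨hB1Bij h, Or.inr h⟩
    have hBijL'card : (Bij ∩ L').ncard = m := by rw [hBijL', hB1card]
    have hBijLcard : (Bij ∩ L).ncard = m := by rw [Set.inter_comm]
    have count : ∀ X : Set V,
        (X ∩ Bij = ∅ ∨ X ∩ Bij = {ci} ∨ Bij ⊆ X) →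
        (X ∩ L).ncard ≤ (X ∩ L').ncard := by
      intro X hX
      have hsplit : ∀ M : Set V, X ∩ M = ((X ∩ Bij) ∩ M) ∪ ((X \ Bij) ∩ M) := by
        intro M
        ext z
        constructor
        · rintro ⟨hzX, hzM⟩
          by_cases hzB : z ∈ Bij
          · exact Or.inl ⟨⟨hzX, hzB⟩, hzM⟩
          · exact Or.inr ⟨⟨hzX, hzB⟩, hzM⟩
        · rintro (⟨⟨h1, _⟩, h2⟩ | ⟨⟨h1, _⟩, h2⟩) <;> exact ⟨h1, h2⟩
      have hdisj1 : ∀ M : Set V, Disjoint ((X ∩ Bij) ∩ M) ((X \ Bij) ∩ M) :=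
        fun M => Set.disjoint_left.mpr fun a ha hb => hb.1.2 ha.1.2
      have hdiffeq : (X \ Bij) ∩ L = (X \ Bij) ∩ L' := by
        ext z
        constructor
        · rintro ⟨h1, h2⟩
          exact ⟨h1, (houtside z h1.2).mpr h2⟩
        · rintro ⟨h1, h2⟩
          exact ⟨h1, (houtside z h1.2).mp h2⟩
      have hkey : ((X ∩ Bij) ∩ L).ncard ≤ ((X ∩ Bij) ∩ L').ncard := by
        rcases hX with h | h | h
        · rw [h]
          simp
        · rw [h]
          have h1 : {ci} ∩ L' = ({ci} : Set V) :=
            Set.inter_eq_left.mpr (Set.singleton_subset_iff.mpr hciL')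
          rw [h1]
          calc ({ci} ∩ L).ncard ≤ ({ci} : Set V).ncard :=
                Set.ncard_le_ncard Set.inter_subset_left (Set.toFinite _)
            _ = ({ci} : Set V).ncard := rfl
        · have h1 : X ∩ Bij = Bij := Set.inter_eq_right.mpr h
          rw [h1, hBijLcard, hBijL'card]
      rw [hsplit L, hsplit L',
        Set.ncard_union_eq (hdisj1 L) (Set.toFinite _) (Set.toFinite _),
        Set.ncard_union_eq (hdisj1 L') (Set.toFinite _) (Set.toFinite _), ← hdiffeq]
      omega
    refine ⟨L', ⟨?_, ?_, ?_, ?_⟩, hL'card⟩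
    · intro v hv
      by_cases hvA : v ∈ A
      · rw [hL', hB1]
        exact Or.inr (Or.inl (Or.inr hvA))
      · have hvt : H.t v = TLabel.R := by
          have hvt' : (relabelR H A).t v = (if v ∈ A then TLabel.R else H.t v) := rfl
          rw [hvt', if_neg hvA] at hv
          exact hv
        by_cases hvB : v ∈ Bij
        · rw [hL', hB1]
          exact Or.inr (Or.inl (Or.inl ⟨hvB, hvt⟩))
        · rw [hL']
          exact Or.inl ⟨hL.1 v hvt, hvB⟩
    · intro v
      exact le_trans (hL.2.1 v) (count _ (nice_cN v))
    · intro e' he'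
      exact le_trans (hL.2.2.1 e' he') (count _ (nice_eN e'))
    · intro e' he' f' hf' hef'
      exact le_trans (hL.2.2.2 e' he' f' hf' hef')
        (count _ (nice_union _ _ (nice_eN e') (nice_eN f')))
  unfold gam
  by_cases hex : ∃ L : Set V, IsMLVE H L
  · obtain ⟨L0, hL0⟩ := hex
    have hne1 : {n | ∃ L : Set V, IsMLVE H L ∧ L.ncard = n}.Nonempty := ⟨L0.ncard, L0, hL0, rfl⟩
    obtain ⟨L, hL, hLcard⟩ := Nat.sInf_mem hne1
    obtain ⟨L', hL', hL'card⟩ := swap L hL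
    have hne2 : {n | ∃ L : Set V, IsMLVE (relabelR H A) L ∧ L.ncard = n}.Nonempty :=
      ⟨L'.ncard, L', hL', rfl⟩
    refine le_antisymm ?_ ?_
    · obtain ⟨M, hM, hMcard⟩ := Nat.sInf_mem hne2
      exact Nat.sInf_le ⟨M, hsubM M hM, hMcard⟩
    · exact Nat.sInf_le ⟨L', hL', hL'card.trans hLcard⟩
  · have e1 : {n | ∃ L : Set V, IsMLVE H L ∧ L.ncard = n} = ∅ := by
      ext n
      simp only [Set.mem_setOf_eq, Set.mem_empty_iff_false, iff_false]
      rintro ⟨L, h, -⟩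
      exact hex ⟨L, h⟩
    have e2 : {n | ∃ L : Set V, IsMLVE (relabelR H A) L ∧ L.ncard = n} = ∅ := by
      ext n
      simp only [Set.mem_setOf_eq, Set.mem_empty_iff_false, iff_false]
      rintro ⟨L, h, -⟩
      exact hex ⟨L, hsubM L h⟩
    rw [e1, e2]
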